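/- Let {ε_t} be a stationary L₄-decomposable Bernoulli shift with E ε_t = 0 and rate a > 2, and let γ_j = E(ε₀ ε_j) denote its autocovariances. Then Σ_{j=1}^∞ j |γ_j| < ∞. -/

import Mathlib

open MeasureTheory ProbabilityTheory Filter Matrix Topology Asymptotics
open scoped ProbabilityTheory

noncomputable section

namespace OnlineCPD

/-- Euclidean norm on `Fin d → ℝ`. -/
def euclNorm {d : ℕ} (v : Fin d → ℝ) : ℝ := Real.sqrt (∑ j, v j ^ 2)

/-- Frobenius norm of a real matrix. -/
def frobNorm {d : ℕ} (A : Matrix (Fin d) (Fin d) ℝ) : ℝ := Real.sqrt (∑ i, ∑ j, A i j ^ 2)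

variable {Ω : Type*} [MeasureSpace Ω]

/-- The `L_ν` norm `(E |X|^ν)^{1/ν}` of a real random variable. -/
def lnorm (X : Ω → ℝ) (ν : ℝ) : ℝ := (∫ ω, |X ω| ^ ν) ^ (1 / ν)

/-- Innovation data for a decomposable Bernoulli shift: an i.i.d. sequence `η` indexed by `ℤ`
together with i.i.d. copies `ηc s t ℓ` of `η 0`, the whole family being independent. -/
structure ShiftData (Ω : Type*) [MeasureSpace Ω] (S : Type*) [MeasurableSpace S] where
  η : ℤ → Ω → S
  ηc : ℤ → ℤ → ℕ → Ω → S
  meas_η : ∀ t, Measurable (η t)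
  meas_ηc : ∀ s t ℓ, Measurable (ηc s t ℓ)
  ident : ∀ t, Measure.map (η t) ℙ = Measure.map (η 0) ℙ
  ident_c : ∀ s t ℓ, Measure.map (ηc s t ℓ) ℙ = Measure.map (η 0) ℙ
  indep : iIndepFun
      (Sum.elim η fun p : ℤ × ℤ × ℕ => ηc p.1 p.2.1 p.2.2) ℙ

/-- The Bernoulli shift process `m_t = h(η_t, η_{t-1}, …)`. -/
def ShiftData.proc {S : Type*} [MeasurableSpace S] (D : ShiftData Ω S)
    (h : (ℕ → S) → ℝ) (t : ℤ) (ω : Ω) : ℝ :=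
  h fun n => D.η (t - n) ω

/-- The coupled version `m̃_{t,ℓ} = h(η_t, …, η_{t-ℓ+1}, η̃_{t-ℓ,t,ℓ}, …)`, replacing the
innovations at lags `≥ ℓ` with independent copies. -/
def ShiftData.coup {S : Type*} [MeasurableSpace S] (D : ShiftData Ω S)
    (h : (ℕ → S) → ℝ) (t : ℤ) (ℓ : ℕ) (ω : Ω) : ℝ :=
  h fun n => if n < ℓ then D.η (t - n) ω else D.ηc (t - n) t ℓ ω

/-- `X` is an `L_ν`-decomposable Bernoulli shift with rate `a`. -/
def IsBernoulliShift (X : ℤ → Ω → ℝ) (ν a : ℝ) : Prop :=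
  ∃ (S : Type) (_ : MeasurableSpace S) (D : ShiftData Ω S) (h : (ℕ → S) → ℝ) (c₀ : ℝ),
    Measurable h ∧ 0 < c₀ ∧
    (∀ t ω, X t ω = D.proc h t ω) ∧
    (∀ t, Integrable fun ω => |X t ω| ^ ν) ∧
    ∀ (t : ℤ) (ℓ : ℕ), 1 ≤ ℓ →
      (Integrable fun ω => |X t ω - D.coup h t ℓ ω| ^ ν) ∧
      lnorm (fun ω => X t ω - D.coup h t ℓ ω) ν ≤ c₀ * (ℓ : ℝ) ^ (-a)

/-- `X_m = O_P(b_m)`: for every `ε > 0` there is `M` with `sup_m P(|X_m| > M b_m) ≤ ε`. -/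
def IsBigOP (X : ℕ → Ω → ℝ) (b : ℕ → ℝ) : Prop :=
  ∀ ε : ℝ, 0 < ε → ∃ M : ℝ, ∀ m, (ℙ {ω | M * b m < |X m ω|}).toReal ≤ ε

/-- `X_m = o_P(1)`: convergence to zero in probability. -/
def IsoP (X : ℕ → Ω → ℝ) : Prop :=
  ∀ ε : ℝ, 0 < ε → Tendsto (fun m => (ℙ {ω | ε ≤ |X m ω|}).toReal) atTop (𝓝 0)

/-- A standard Wiener process: `W 0 = 0` a.s., independent Gaussian increments with the right
variances, and continuous paths. -/
structure IsStdWiener (W : ℝ → Ω → ℝ) : Prop where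
  meas : ∀ t, Measurable (W t)
  zero : ∀ᵐ ω ∂(ℙ : Measure Ω), W 0 ω = 0
  indep_incr : ∀ (n : ℕ) (t : Fin (n + 1) → ℝ), (∀ i, 0 ≤ t i) → Monotone t →
    iIndepFun
      (fun i : Fin n => fun ω => W (t i.succ) ω - W (t i.castSucc) ω) ℙ
  gauss_incr : ∀ s t : ℝ, 0 ≤ s → s ≤ t →
    Measure.map (fun ω => W t ω - W s ω) ℙ = gaussianReal 0 ((t - s).toNNReal)
  cont : ∀ᵐ ω ∂(ℙ : Measure Ω), Continuous fun t : ℝ => W t ω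

/-- Convergence in distribution of real random variables (possibly defined on another
probability space), tested against bounded continuous functions. -/
def TendstoInDistrib {Ω' : Type*} [MeasureSpace Ω'] (X : ℕ → Ω → ℝ) (L : Ω' → ℝ) : Prop :=
  ∀ f : ℝ → ℝ, Continuous f → (∃ M, ∀ x, |f x| ≤ M) →
    Tendsto (fun m => ∫ ω, f (X m ω)) atTop (𝓝 (∫ ω', f (L ω')))

/-- The training-sample least squares estimator. -/
def betaHat {d : ℕ} (x : ℤ → Ω → Fin d → ℝ) (y : ℤ → Ω → ℝ) (m : ℕ) (ω : Ω) :
    Fin d → ℝ :=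
  (∑ t ∈ Finset.Icc (1 : ℤ) (m : ℤ), Matrix.vecMulVec (x t ω) (x t ω))⁻¹ *ᵥ
    ∑ t ∈ Finset.Icc (1 : ℤ) (m : ℤ), y t ω • x t ω

/-- Monitoring residual at time `t`. -/
def resid {d : ℕ} (x : ℤ → Ω → Fin d → ℝ) (y : ℤ → Ω → ℝ) (m : ℕ) (t : ℤ) (ω : Ω) : ℝ :=
  y t ω - x t ω ⬝ᵥ betaHat x y m ω

/-- The CUSUM detector `Q(m;k) = Σ_{t=m+1}^{m+k} ε̂_t`. -/
def Qstat {d : ℕ} (x : ℤ → Ω → Fin d → ℝ) (y : ℤ → Ω → ℝ) (m k : ℕ) (ω : Ω) : ℝ :=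
  ∑ t ∈ Finset.Icc ((m : ℤ) + 1) ((m : ℤ) + k), resid x y m t ω

/-- The boundary function `g_η(m;k) = σ m^{1/2} (1 + k/m) (k/(m+k))^η`. -/
def gBound (σ η : ℝ) (m k : ℕ) : ℝ :=
  σ * (m : ℝ) ^ ((1 : ℝ) / 2) * (1 + (k : ℝ) / m) * ((k : ℝ) / (m + k)) ^ η

/-- The norming sequence `r_m = a_m / (a_m + m)`. -/
def rSeq (a : ℕ → ℕ) (m : ℕ) : ℝ := (a m : ℝ) / (a m + m)

/-- Assumption A1 (weak dependence of errors and regressors). -/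
def AssumpA1 {d : ℕ} (x : ℤ → Ω → Fin d → ℝ) (ε : ℤ → Ω → ℝ) (aexp : ℝ) : Prop :=
  2 < aexp ∧ IsBernoulliShift ε 4 aexp ∧ (∀ t, ∫ ω, ε t ω = 0) ∧
    (0 < ∫ ω, ε 0 ω ^ 2) ∧
    ∀ j : Fin d, (j : ℕ) ≠ 0 → IsBernoulliShift (fun t ω => x t ω j) 4 aexp

/-- Assumption A2 (exogeneity and non-degenerate second moments). -/
def AssumpA2 {d : ℕ} (x : ℤ → Ω → Fin d → ℝ) (ε : ℤ → Ω → ℝ)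
    (C : Matrix (Fin d) (Fin d) ℝ) : Prop :=
  (∀ t, ∫ ω, ε t ω = 0) ∧
  (∀ (t : ℤ) (j : Fin d), (j : ℕ) ≠ 0 → ∫ ω, x t ω j * ε t ω = 0) ∧
  (∀ (t : ℤ) (i j : Fin d), ∫ ω, x t ω i * x t ω j = C i j) ∧ C.PosDef

/-- The long-run variance `σ² = lim_m E (m^{-1/2} Σ_{t=1}^m ε_t)²`. -/
def IsLongRunVar (ε : ℤ → Ω → ℝ) (σ2 : ℝ) : Prop :=
  Tendsto (fun m : ℕ => ∫ ω, ((m : ℝ) ^ (-(1 : ℝ) / 2) * ∑ t ∈ Finset.Icc (1 : ℤ) (m : ℤ), ε t ω) ^ 2)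
    atTop (𝓝 σ2)

/-- The trimming conditions: `a_m → ∞`, `a_m / min{m, T_m} → 0`, and `a_m ≤ T_m`. -/
def Trimming (a T : ℕ → ℕ) : Prop :=
  Tendsto a atTop atTop ∧
  Tendsto (fun m => (a m : ℝ) / min (m : ℝ) (T m : ℝ)) atTop (𝓝 0) ∧
  ∀ m, a m ≤ T m

open Classical in
/-- First crossing time in `[lo, T]`, equal to `T` if no crossing occurs. -/
def stopTime (T : ℕ) (lo : ℕ) (cross : ℕ → Prop) : ℕ :=
  if (∃ k, lo ≤ k ∧ k ≤ T ∧ cross k) then sInf {k | lo ≤ k ∧ k ≤ T ∧ cross k} else T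

/-- `sup_{1 ≤ u < ∞} |W(u)|/u^η`. -/
def wienerSupTail {Ω' : Type*} [MeasureSpace Ω'] (W : ℝ → Ω' → ℝ) (η : ℝ) (ω : Ω') : ℝ :=
  ⨆ u : {u : ℝ // 1 ≤ u}, |W u ω| / (u : ℝ) ^ η


/-- Sample autocovariance of the residuals, `γ̂_j = m⁻¹ Σ_{t=j+1}^m ε̂_t ε̂_{t-j}`. -/
def gammaHat {d : ℕ} (x : ℤ → Ω → Fin d → ℝ) (y : ℤ → Ω → ℝ) (m j : ℕ) (ω : Ω) : ℝ :=
  (m : ℝ)⁻¹ * ∑ t ∈ Finset.Icc ((j : ℤ) + 1) (m : ℤ), resid x y m t ω * resid x y m (t - j) ω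

/-- The Bartlett long-run variance estimator with bandwidth `H`. -/
def sigmaHatSq {d : ℕ} (x : ℤ → Ω → Fin d → ℝ) (y : ℤ → Ω → ℝ) (H m : ℕ) (ω : Ω) : ℝ :=
  gammaHat x y m 0 ω + 2 * ∑ j ∈ Finset.Icc 1 H, (1 - (j : ℝ) / (H + 1)) * gammaHat x y m j ω

/-- Regressor vector of the dynamic model: exogenous regressors followed by `p` lags of `y`. -/
def xdyn {dz p : ℕ} (z : ℤ → Ω → Fin dz → ℝ) (y : ℤ → Ω → ℝ) (t : ℤ) (ω : Ω) :
    Fin (dz + p) → ℝ :=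
  Fin.append (z t ω) fun i : Fin p => y (t - 1 - (i : ℕ)) ω

end OnlineCPD

namespace OnlineCPD


open scoped ENNReal

section Aux

variable {Ω : Type} [MeasureSpace Ω] [IsProbabilityMeasure (ℙ : Measure Ω)]

/-- `measurable_pi_lambda` with an explicit σ-algebra on the domain. -/
lemma measurable_pi_lambda' {α : Type*} {δ : Type*} {π : δ → Type*} (m : MeasurableSpace α)
    (mπ : ∀ a, MeasurableSpace (π a)) (f : α → ∀ a, π a)
    (hf : ∀ a, @Measurable _ _ m (mπ a) fun c => f c a) :
    @Measurable _ _ m (MeasurableSpace.pi) f :=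
  measurable_pi_lambda f hf

omit [IsProbabilityMeasure (ℙ : Measure Ω)] in
/-- If `|f|^4` is integrable, then `f ∈ L⁴`. -/
lemma memLp_four_of_integrable {f : Ω → ℝ} (hf : AEStronglyMeasurable f (ℙ : Measure Ω))
    (h : Integrable (fun ω => |f ω| ^ (4 : ℝ)) (ℙ : Measure Ω)) :
    MemLp f 4 (ℙ : Measure Ω) := by
  have h44 : ((4 : ℝ≥0∞) / 4) = 1 := ENNReal.div_self (by norm_num) (by norm_num)
  have h1 : MemLp (fun ω => ‖f ω‖ ^ ((4 : ℝ≥0∞)).toReal) ((4 : ℝ≥0∞) / 4) (ℙ : Measure Ω) := by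
    rw [h44, memLp_one_iff_integrable]
    have h4r : ((4 : ℝ≥0∞)).toReal = (4 : ℝ) := by norm_num
    simpa [h4r, Real.norm_eq_abs] using h
  exact (memLp_norm_rpow_iff hf (by norm_num) (by norm_num)).mp h1

end Aux

/-- **Lemma (summability of weighted autocovariances).**
If `{ε_t}` is a stationary `L₄`-decomposable Bernoulli shift with mean zero and rate `a > 2`,
then `Σ_{j=1}^∞ j |γ_j| < ∞`, where `γ_j = E(ε₀ ε_j)`. -/
theorem autocovariance_summable
    {Ω : Type} [MeasureSpace Ω] [IsProbabilityMeasure (ℙ : Measure Ω)]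
    (ε : ℤ → Ω → ℝ) (aexp : ℝ) (ha : 2 < aexp)
    (hmeas : ∀ t, Measurable (ε t))
    (hshift : IsBernoulliShift ε 4 aexp)
    (hmean : ∀ t, ∫ ω, ε t ω = 0)
    (hstat : ∀ (n : ℕ) (t : Fin n → ℤ) (s : ℤ),
      Measure.map (fun ω i => ε (t i) ω) ℙ = Measure.map (fun ω i => ε (t i + s) ω) ℙ) :
    Summable fun j : ℕ => (j : ℝ) * |∫ ω, ε 0 ω * ε (j : ℤ) ω| := by
  obtain ⟨S, mS, D, h, c₀, hmeasH, hc₀, hrep, hint4, hcoup⟩ := hshift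
  letI : MeasurableSpace S := mS
  have haes : ∀ t : ℤ, AEStronglyMeasurable (ε t) (ℙ : Measure Ω) :=
    fun t => (hmeas t).aestronglyMeasurable
  have hmem4 : ∀ t : ℤ, MemLp (ε t) 4 (ℙ : Measure Ω) :=
    fun t => memLp_four_of_integrable (haes t) (hint4 t)
  -- measurability of the coupled process
  have hmeasCoup : ∀ (t : ℤ) (ℓ : ℕ), Measurable (D.coup h t ℓ) := by
    intro t ℓ
    refine hmeasH.comp (measurable_pi_lambda _ fun n => ?_)
    by_cases hn : n < ℓ
    · simpa [hn] using D.meas_η (t - n)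
    · simpa [hn] using D.meas_ηc (t - n) t ℓ
  -- the innovation family
  set F : (ℤ ⊕ ℤ × ℤ × ℕ) → Ω → S :=
    Sum.elim D.η (fun p : ℤ × ℤ × ℕ => D.ηc p.1 p.2.1 p.2.2) with hFdef
  have hFmeas : ∀ i, Measurable (F i) := by
    rintro (t | p)
    · exact D.meas_η t
    · exact D.meas_ηc _ _ _
  -- independence of ε 0 and the coupled variable
  have hindep : ∀ j : ℕ, 1 ≤ j →
      IndepFun (ε 0) (D.coup h (j : ℤ) j) (ℙ : Measure Ω) := by
    intro j hj
    set A : Set (ℤ ⊕ ℤ × ℤ × ℕ) := Sum.inl '' Set.Iic (0 : ℤ) with hA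
    have hInd : Indep (⨆ i ∈ A, MeasurableSpace.comap (F i) mS)
        (⨆ i ∈ Aᶜ, MeasurableSpace.comap (F i) mS) (ℙ : Measure Ω) :=
      indep_iSup_of_disjoint (fun i => (hFmeas i).comap_le) D.indep.iIndep
        disjoint_compl_right
    have hg0 : Measurable[⨆ i ∈ A, MeasurableSpace.comap (F i) mS]
        (fun ω (n : ℕ) => D.η ((0 : ℤ) - n) ω) := by
      apply measurable_pi_lambda' (⨆ i ∈ A, MeasurableSpace.comap (F i) mS) (fun _ => mS)
      intro n
      have hi : (Sum.inl ((0 : ℤ) - n) : ℤ ⊕ ℤ × ℤ × ℕ) ∈ A :=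
        ⟨(0 : ℤ) - n, by simp, rfl⟩
      exact (Measurable.of_comap_le le_rfl).mono
        (le_biSup (fun i => MeasurableSpace.comap (F i) mS) hi) le_rfl
    have h0 : Measurable[⨆ i ∈ A, MeasurableSpace.comap (F i) mS] (ε 0) := by
      have hε0 : ε 0 = fun ω => h fun n : ℕ => D.η ((0 : ℤ) - n) ω :=
        funext fun ω => hrep 0 ω
      rw [hε0]
      exact hmeasH.comp hg0
    have hgc : Measurable[⨆ i ∈ Aᶜ, MeasurableSpace.comap (F i) mS]
        (fun ω (n : ℕ) =>
          if n < j then D.η ((j : ℤ) - n) ω else D.ηc ((j : ℤ) - n) (j : ℤ) j ω) := by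
      apply measurable_pi_lambda' (⨆ i ∈ Aᶜ, MeasurableSpace.comap (F i) mS) (fun _ => mS)
      intro n
      by_cases hn : n < j
      · have hfun : (fun ω => if n < j then D.η ((j : ℤ) - n) ω
            else D.ηc ((j : ℤ) - n) (j : ℤ) j ω) = D.η ((j : ℤ) - n) :=
          funext fun ω => if_pos hn
        rw [hfun]
        have hi : (Sum.inl ((j : ℤ) - n) : ℤ ⊕ ℤ × ℤ × ℕ) ∈ Aᶜ := by
          rintro ⟨t, ht, hteq⟩
          have ht' : t = (j : ℤ) - n := Sum.inl.inj hteq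
          simp only [Set.mem_Iic] at ht
          omega
        exact (Measurable.of_comap_le le_rfl).mono
          (le_biSup (fun i => MeasurableSpace.comap (F i) mS) hi) le_rfl
      · have hfun : (fun ω => if n < j then D.η ((j : ℤ) - n) ω
            else D.ηc ((j : ℤ) - n) (j : ℤ) j ω) = D.ηc ((j : ℤ) - n) (j : ℤ) j :=
          funext fun ω => if_neg hn
        rw [hfun]
        have hi : (Sum.inr ((j : ℤ) - n, (j : ℤ), j) : ℤ ⊕ ℤ × ℤ × ℕ) ∈ Aᶜ := by
          rintro ⟨t, _, hteq⟩
          exact Sum.inl_ne_inr hteq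
        exact (Measurable.of_comap_le le_rfl).mono
          (le_biSup (fun i => MeasurableSpace.comap (F i) mS) hi) le_rfl
    have hc : Measurable[⨆ i ∈ Aᶜ, MeasurableSpace.comap (F i) mS]
        (D.coup h (j : ℤ) j) :=
      hmeasH.comp hgc
    exact indep_of_indep_of_le_left (indep_of_indep_of_le_right hInd hc.comap_le)
      h0.comap_le
  -- the constant from Hölder's inequality
  set K : ℝ := (∫ ω, ‖ε 0 ω‖ ^ ((4 : ℝ) / 3)) ^ (1 / ((4 : ℝ) / 3)) with hK
  have hK0 : 0 ≤ K :=
    Real.rpow_nonneg (integral_nonneg fun ω => Real.rpow_nonneg (norm_nonneg _) _) _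
  -- key estimate
  have key : ∀ j : ℕ, 1 ≤ j →
      |∫ ω, ε 0 ω * ε (j : ℤ) ω| ≤ K * (c₀ * (j : ℝ) ^ (-aexp)) := by
    intro j hj
    set g : Ω → ℝ := D.coup h (j : ℤ) j with hg
    set δ : Ω → ℝ := fun ω => ε (j : ℤ) ω - g ω with hδ
    have hδmeas : Measurable δ := (hmeas _).sub (hmeasCoup _ _)
    have hδ4 : MemLp δ 4 (ℙ : Measure Ω) :=
      memLp_four_of_integrable hδmeas.aestronglyMeasurable (hcoup (j : ℤ) j hj).1
    have hg4 : MemLp g 4 (ℙ : Measure Ω) := by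
      have hsub : MemLp (fun ω => ε (j : ℤ) ω - δ ω) 4 (ℙ : Measure Ω) :=
        (hmem4 (j : ℤ)).sub hδ4
      have : (fun ω => ε (j : ℤ) ω - δ ω) = g := funext fun ω => by
        simp [hδ]
      rwa [this] at hsub
    have hone : (1 : ℝ≥0∞) / 1 = 1 / 2 + 1 / 2 := by
      simp only [one_div]
      rw [ENNReal.inv_two_add_inv_two, inv_one]
    have hε02 : MemLp (ε 0) 2 (ℙ : Measure Ω) :=
      (hmem4 0).mono_exponent (by norm_num)
    have hδ2 : MemLp δ 2 (ℙ : Measure Ω) := hδ4.mono_exponent (by norm_num)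
    have hg2 : MemLp g 2 (ℙ : Measure Ω) := hg4.mono_exponent (by norm_num)
    have int1 : Integrable (fun ω => ε 0 ω * g ω) (ℙ : Measure Ω) :=
      memLp_one_iff_integrable.mp (hg2.smul hε02)
    have int2 : Integrable (fun ω => ε 0 ω * δ ω) (ℙ : Measure Ω) :=
      memLp_one_iff_integrable.mp (hδ2.smul hε02)
    have hsplit : ∫ ω, ε 0 ω * ε (j : ℤ) ω
        = (∫ ω, ε 0 ω * g ω) + ∫ ω, ε 0 ω * δ ω := by
      rw [← integral_add int1 int2]
      refine integral_congr_ae (Eventually.of_forall fun ω => ?_)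
      simp only [hδ]; ring
    have hzero : ∫ ω, ε 0 ω * g ω = 0 := by
      rw [(hindep j hj).integral_fun_mul_eq_mul_integral (haes 0) (hmeasCoup _ _).aestronglyMeasurable]
      have h0 : integral (ℙ : Measure Ω) (ε 0) = 0 := hmean 0
      rw [h0, zero_mul]
    have hpq : ((4 : ℝ) / 3).HolderConjugate 4 := by
        rw [Real.holderConjugate_iff]; norm_num
    have hεLp : MemLp (ε 0) (ENNReal.ofReal ((4 : ℝ) / 3)) (ℙ : Measure Ω) := by
      refine (hmem4 0).mono_exponent ?_
      calc ENNReal.ofReal ((4 : ℝ) / 3) ≤ ENNReal.ofReal 4 :=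
            ENNReal.ofReal_le_ofReal (by norm_num)
        _ = 4 := by simp [ENNReal.ofReal_ofNat]
    have hδLp : MemLp δ (ENNReal.ofReal (4 : ℝ)) (ℙ : Measure Ω) := by
      simpa [ENNReal.ofReal_ofNat] using hδ4
    have hHolder := integral_mul_norm_le_Lp_mul_Lq (μ := (ℙ : Measure Ω)) hpq hεLp hδLp
    have hlnorm : (∫ ω, ‖δ ω‖ ^ (4 : ℝ)) ^ (1 / (4 : ℝ)) ≤ c₀ * (j : ℝ) ^ (-aexp) := by
      have := (hcoup (j : ℤ) j hj).2
      simpa [lnorm, hδ, hg, Real.norm_eq_abs] using this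
    calc |∫ ω, ε 0 ω * ε (j : ℤ) ω| = |∫ ω, ε 0 ω * δ ω| := by
          rw [hsplit, hzero, zero_add]
      _ ≤ ∫ ω, ‖ε 0 ω‖ * ‖δ ω‖ := by
          simpa [Real.norm_eq_abs, abs_mul] using
            norm_integral_le_integral_norm (μ := (ℙ : Measure Ω)) (fun ω => ε 0 ω * δ ω)
      _ ≤ (∫ ω, ‖ε 0 ω‖ ^ ((4 : ℝ) / 3)) ^ (1 / ((4 : ℝ) / 3))
            * (∫ ω, ‖δ ω‖ ^ (4 : ℝ)) ^ (1 / (4 : ℝ)) := hHolder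
      _ ≤ K * (c₀ * (j : ℝ) ^ (-aexp)) := by
          rw [hK]
          refine mul_le_mul_of_nonneg_left hlnorm ?_
          exact Real.rpow_nonneg
            (integral_nonneg fun ω => Real.rpow_nonneg (norm_nonneg _) _) _
  -- comparison with a summable series
  have hle : ∀ j : ℕ, (j : ℝ) * |∫ ω, ε 0 ω * ε (j : ℤ) ω|
      ≤ (K * c₀) * (j : ℝ) ^ ((1 : ℝ) - aexp) := by
    intro j
    rcases Nat.eq_zero_or_pos j with rfl | hj
    · simp [Real.zero_rpow (show (1 : ℝ) - aexp ≠ 0 by linarith)]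
    · have hjpos : (0 : ℝ) < (j : ℝ) := Nat.cast_pos.mpr hj
      calc (j : ℝ) * |∫ ω, ε 0 ω * ε (j : ℤ) ω|
          ≤ (j : ℝ) * (K * (c₀ * (j : ℝ) ^ (-aexp))) :=
            mul_le_mul_of_nonneg_left (key j hj) (Nat.cast_nonneg j)
        _ = (K * c₀) * (j : ℝ) ^ ((1 : ℝ) - aexp) := by
            rw [show (1 : ℝ) - aexp = 1 + -aexp by ring, Real.rpow_add hjpos,
              Real.rpow_one]
            ring
  refine Summable.of_nonneg_of_le
    (fun j => mul_nonneg (Nat.cast_nonneg j) (abs_nonneg _)) hle ?_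
  exact (Real.summable_nat_rpow.mpr (by linarith)).mul_left _


end OnlineCPD
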